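/- Let A be a square matrix with integer entries all of whose complex eigenvalues have modulus at most 1. Then every nonzero eigenvalue of A is a root of unity. -/

import Mathlib

open Polynomial IntermediateField

private lemma mprod_le_one (s : Multiset ℝ) (h0 : ∀ x ∈ s, 0 ≤ x) (h1 : ∀ x ∈ s, x ≤ 1) :
    s.prod ≤ 1 := by
  induction s using Multiset.induction_on with
  | empty => simp
  | cons a s ih =>
    rw [Multiset.prod_cons]
    have ha0 := h0 a (Multiset.mem_cons_self a s)
    have ha1 := h1 a (Multiset.mem_cons_self a s)
    have hs := ih (fun x hx => h0 x (Multiset.mem_cons_of_mem hx))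
      (fun x hx => h1 x (Multiset.mem_cons_of_mem hx))
    calc a * s.prod ≤ 1 * 1 := by
          apply mul_le_mul ha1 hs ?_ zero_le_one
          exact Multiset.prod_nonneg (fun x hx => h0 x (Multiset.mem_cons_of_mem hx))
      _ = 1 := by ring

/-- An integer matrix all of whose complex eigenvalues have modulus at most `1` has all its
nonzero eigenvalues equal to roots of unity. -/
theorem stmt_9 {n : ℕ} (A : Matrix (Fin n) (Fin n) ℤ)
    (hbound : ∀ μ : ℂ, (Matrix.charpoly (A.map (Int.cast : ℤ → ℂ))).IsRoot μ →
      ‖μ‖ ≤ 1) :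
    ∀ μ : ℂ, (Matrix.charpoly (A.map (Int.cast : ℤ → ℂ))).IsRoot μ → μ ≠ 0 →
      ∃ k : ℕ, 0 < k ∧ μ ^ k = 1 := by
  intro μ hroot hμ0
  set p : Polynomial ℤ := A.charpoly with hp
  have hpmap : Matrix.charpoly (A.map (Int.cast : ℤ → ℂ)) = p.map (Int.castRingHom ℂ) :=
    Matrix.charpoly_map A (Int.castRingHom ℂ)
  -- μ is an algebraic integer
  have hμint : IsIntegral ℤ μ := by
    refine ⟨p, A.charpoly_monic, ?_⟩
    have := hroot
    rw [hpmap] at this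
    simpa [eval₂_eq_eval_map] using this
  have hμintQ : IsIntegral ℚ μ := hμint.tower_top
  -- minpoly ℚ μ divides the charpoly over ℚ
  set q : Polynomial ℚ := minpoly ℚ μ with hq
  have hq0 : q ≠ 0 := minpoly.ne_zero hμintQ
  have hdvd : q ∣ p.map (Int.castRingHom ℚ) := by
    apply minpoly.dvd
    have : aeval μ (p.map (Int.castRingHom ℚ)) =
        ((p.map (Int.castRingHom ℚ)).map (algebraMap ℚ ℂ)).eval μ := by
      rw [aeval_def, eval₂_eq_eval_map]
    rw [this, Polynomial.map_map]
    rw [show (algebraMap ℚ ℂ).comp (Int.castRingHom ℚ) = Int.castRingHom ℂ by ext; simp]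
    rw [hpmap] at hroot
    exact hroot
  -- all roots of q in ℂ have modulus ≤ 1
  set Q : Polynomial ℂ := q.map (algebraMap ℚ ℂ) with hQ
  have hQ0 : Q ≠ 0 := (Polynomial.map_ne_zero_iff (algebraMap ℚ ℂ).injective).mpr hq0
  have hroots_le : ∀ z ∈ Q.roots, ‖z‖ ≤ 1 := by
    intro z hz
    apply hbound
    rw [hpmap]
    have hdvdC : Q ∣ p.map (Int.castRingHom ℂ) := by
      obtain ⟨r, hr⟩ := hdvd
      refine ⟨r.map (algebraMap ℚ ℂ), ?_⟩
      have := congrArg (Polynomial.map (algebraMap ℚ ℂ)) hr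
      rw [Polynomial.map_map, Polynomial.map_mul] at this
      rw [show (algebraMap ℚ ℂ).comp (Int.castRingHom ℚ) = Int.castRingHom ℂ by ext; simp] at this
      exact this
    have hzQ : Q.IsRoot z := (Polynomial.isRoot_of_mem_roots hz)
    obtain ⟨r, hr⟩ := hdvdC
    rw [hr]
    simp [IsRoot, hzQ.eq_zero]
  -- Q splits since ℂ is algebraically closed; product of |roots| equals |coeff 0| ≥ 1
  have hmonic : Q.Monic := (minpoly.monic hμintQ).map _
  have hsplit : Q = (Multiset.map (fun a => X - C a) Q.roots).prod := by
    exact (IsAlgClosed.splits Q).eq_prod_roots_of_monic hmonic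
  -- constant coefficient of q is a nonzero integer divided by 1, |coeff 0| ≥ 1
  have hZq : q = (minpoly ℤ μ).map (Int.castRingHom ℚ) := by
    rw [hq, minpoly.isIntegrallyClosed_eq_field_fractions' ℚ hμint]
    rfl
  have hc0 : q.coeff 0 ≠ 0 := minpoly.coeff_zero_ne_zero hμintQ hμ0
  have hc0int : ∃ m : ℤ, (m : ℚ) = q.coeff 0 := ⟨(minpoly ℤ μ).coeff 0, by rw [hZq]; simp⟩
  have habs_c0 : 1 ≤ |q.coeff 0| := by
    obtain ⟨m, hm⟩ := hc0int
    have hm0 : m ≠ 0 := by rintro rfl; simp at hm; exact hc0 hm.symm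
    rw [← hm, ← Int.cast_abs]
    exact_mod_cast Int.one_le_abs hm0
  have hprod : (Q.roots.map (‖·‖)).prod = |((q.coeff 0 : ℚ) : ℝ)| := by
    have h1 : ‖Q.eval 0‖ = (Q.roots.map (‖·‖)).prod := by
      conv_lhs => rw [hsplit]
      rw [Polynomial.eval_multiset_prod, Multiset.map_map,
        show ∀ s : Multiset ℂ, ‖s.prod‖ = (s.map (‖·‖)).prod from
          fun s => map_multiset_prod (normHom : ℂ →*₀ ℝ) s, Multiset.map_map]
      congr 1
      apply Multiset.map_congr rfl
      intro a _
      simp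
    have h2 : Q.eval 0 = ((q.coeff 0 : ℚ) : ℂ) := by
      rw [hQ, eval_map, eval₂_at_zero]
      simp
    rw [← h1, h2, show (((q.coeff 0 : ℚ)) : ℂ) = (((q.coeff 0 : ℚ) : ℝ) : ℂ) by push_cast; ring,
      Complex.norm_real, Real.norm_eq_abs]
  -- each root has modulus exactly 1
  have hroots_eq : ∀ z ∈ Q.roots, ‖z‖ = 1 := by
    intro z hz
    refine le_antisymm (hroots_le z hz) ?_
    obtain ⟨s, hs⟩ := Multiset.exists_cons_of_mem hz
    have hrest : ((s.map (‖·‖)).prod : ℝ) ≤ 1 := by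
      apply mprod_le_one
      · intro x hx
        obtain ⟨y, hy, rfl⟩ := Multiset.mem_map.mp hx
        exact (norm_nonneg y)
      · intro x hx
        obtain ⟨y, hy, rfl⟩ := Multiset.mem_map.mp hx
        exact hroots_le y (by rw [hs]; exact Multiset.mem_cons_of_mem hy)
    have : 1 ≤ (Q.roots.map (‖·‖)).prod := by
      rw [hprod, show ((1:ℝ) = ((1:ℚ):ℝ)) by norm_num, ← Rat.cast_abs, Rat.cast_le]
      exact habs_c0
    rw [hs, Multiset.map_cons, Multiset.prod_cons] at this
    nlinarith [norm_nonneg z]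
  -- now work in the number field ℚ⟮μ⟯
  haveI : FiniteDimensional ℚ ℚ⟮μ⟯ := IntermediateField.adjoin.finiteDimensional hμintQ
  haveI : NumberField ℚ⟮μ⟯ := ⟨⟩
  set x : ℚ⟮μ⟯ := IntermediateField.AdjoinSimple.gen ℚ μ with hx
  have hxμ : algebraMap ℚ⟮μ⟯ ℂ x = μ := rfl
  have hxint : IsIntegral ℤ x := by
    rw [← isIntegral_algebraMap_iff (algebraMap ℚ⟮μ⟯ ℂ).injective, hxμ]
    exact hμint
  have hminx : minpoly ℚ x = q := by
    exact (minpoly.algebraMap_eq (algebraMap ℚ⟮μ⟯ ℂ).injective x).symm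
  have hnorm : ∀ φ : ℚ⟮μ⟯ →+* ℂ, ‖φ x‖ = 1 := by
    intro φ
    have hmem : φ x ∈ (minpoly ℚ x).rootSet ℂ := by
      rw [← NumberField.Embeddings.range_eval_eq_rootSet_minpoly ℚ⟮μ⟯ ℂ x]
      exact ⟨φ, rfl⟩
    rw [hminx, Polynomial.mem_rootSet] at hmem
    have : φ x ∈ Q.roots := by
      refine Polynomial.mem_roots'.mpr ⟨hQ0, ?_⟩
      rw [hQ, IsRoot, eval_map, ← aeval_def]
      exact hmem.2
    exact hroots_eq _ this
  obtain ⟨k, hk, hpow⟩ := NumberField.Embeddings.pow_eq_one_of_norm_eq_one ℚ⟮μ⟯ ℂ hxint hnorm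
  refine ⟨k, hk, ?_⟩
  rw [← hxμ, ← map_pow, hpow, map_one]
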